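/- Let (e_n) be a normalised unconditional Schauder basis of a Banach space X such that any two normalised block sequences (x_n), (y_n) interlacing as x_1 < y_1 < x_2 < y_2 < ... are equivalent. Then every normalised block sequence (x_n) is equivalent to its shift (x_{n+1}). -/

import Mathlib

open Filter Topology

noncomputable section

structure UncSchauderBasis (X : Type*) [NormedAddCommGroup X] [NormedSpace ℝ X] where
  e : ℕ → X
  coord : ℕ → X →L[ℝ] ℝ
  biorth : ∀ n m, coord n (e m) = if n = m then 1 else 0
  expansion : ∀ x : X,
    Filter.Tendsto (fun N => ∑ n ∈ Finset.range N, coord n x • e n) Filter.atTop (nhds x)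
  normalised : ∀ n, ‖e n‖ = 1

section Defs

variable {X Y : Type*} [NormedAddCommGroup X] [NormedSpace ℝ X]
  [NormedAddCommGroup Y] [NormedSpace ℝ Y]

/-- Convergence of the series `∑ x n` (of partial sums). -/
def Converges (x : ℕ → X) : Prop :=
  ∃ s, Filter.Tendsto (fun N => ∑ n ∈ Finset.range N, x n) Filter.atTop (nhds s)

/-- Two sequences are equivalent if the same scalar series converge. -/
def SeqEquiv (x : ℕ → X) (y : ℕ → Y) : Prop :=
  ∀ a : ℕ → ℝ, Converges (fun n => a n • x n) ↔ Converges (fun n => a n • y n)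

/-- `C`-equivalence of two sequences. -/
def CEquiv (C : ℝ) (x : ℕ → X) (y : ℕ → Y) : Prop :=
  ∀ (a : ℕ → ℝ) (N : ℕ),
    C⁻¹ * ‖∑ n ∈ Finset.range N, a n • y n‖ ≤ ‖∑ n ∈ Finset.range N, a n • x n‖ ∧
    ‖∑ n ∈ Finset.range N, a n • x n‖ ≤ C * ‖∑ n ∈ Finset.range N, a n • y n‖

/-- A basic sequence: uniformly bounded partial-sum projections. -/
def IsBasicSeq (x : ℕ → X) : Prop :=
  ∃ K, 1 ≤ K ∧ ∀ (a : ℕ → ℝ) (m n : ℕ), m ≤ n →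
    ‖∑ i ∈ Finset.range m, a i • x i‖ ≤ K * ‖∑ i ∈ Finset.range n, a i • x i‖

/-- A sequence of signs. -/
def IsSigns (θ : ℕ → ℝ) : Prop := ∀ n, θ n = 1 ∨ θ n = -1

end Defs

namespace UncSchauderBasis

variable {X : Type*} [NormedAddCommGroup X] [NormedSpace ℝ X] (b : UncSchauderBasis X)

/-- Support of a vector with respect to the basis. -/
def supp (x : X) : Set ℕ := {n | b.coord n x ≠ 0}

/-- A normalised block sequence of the basis. -/
def IsBlockSeq (x : ℕ → X) : Prop :=
  (∀ n, ‖x n‖ = 1) ∧ (∀ n, (b.supp (x n)).Finite) ∧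
  ∀ n, ∀ i ∈ b.supp (x n), ∀ j ∈ b.supp (x (n+1)), i < j

/-- Unconditionality of the basis. -/
def Unconditional : Prop :=
  ∀ θ : ℕ → ℝ, IsSigns θ → SeqEquiv (fun n => θ n • b.e n) b.e

/-- 1-unconditionality (finite-sum form). -/
def OneUnconditional : Prop :=
  ∀ (θ a : ℕ → ℝ), IsSigns θ → ∀ N,
    ‖∑ n ∈ Finset.range N, (θ n * a n) • b.e n‖ ≤ ‖∑ n ∈ Finset.range N, a n • b.e n‖

/-- The shift property: every normalised block sequence is equivalent to its shift. -/
def ShiftProperty : Prop :=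
  ∀ x : ℕ → X, b.IsBlockSeq x → SeqEquiv x (fun n => x (n+1))

/-- The basis is shrinking. -/
def Shrinking : Prop :=
  ∀ f : X →L[ℝ] ℝ, Filter.Tendsto
    (fun n => sSup ((fun y => |f y|) ''
      {y | y ∈ Submodule.span ℝ (Set.range fun i => b.e (n + i)) ∧ ‖y‖ ≤ 1}))
    Filter.atTop (nhds 0)

/-- The basis is boundedly complete. -/
def BoundedlyComplete : Prop :=
  ∀ a : ℕ → ℝ, (∃ M, ∀ N, ‖∑ i ∈ Finset.range N, a i • b.e i‖ ≤ M) →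
    Converges (fun i => a i • b.e i)

end UncSchauderBasis


section Aux

open Finset

variable {X : Type*} [NormedAddCommGroup X] [NormedSpace ℝ X] [CompleteSpace X]
  (b : UncSchauderBasis X)

/-- Coordinates determine the vector. -/
lemma coord_ext {x y : X} (h : ∀ n, b.coord n x = b.coord n y) : x = y := by
  have hx := b.expansion x
  have hy := b.expansion y
  simp only [h] at hx
  exact tendsto_nhds_unique hx hy

lemma supp_nonempty_of_ne_zero {x : X} (hx : x ≠ 0) : (b.supp x).Nonempty := by
  by_contra h
  rw [Set.not_nonempty_iff_eq_empty] at h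
  apply hx
  apply coord_ext b
  intro n
  have hn : n ∉ b.supp x := by rw [h]; exact Set.notMem_empty n
  simp only [UncSchauderBasis.supp, Set.mem_setOf_eq, not_not] at hn
  simp [hn]

variable (θ : ℕ → ℝ)

lemma sgnflip_exists (hu : b.Unconditional) (hθ : IsSigns θ) (x : X) :
    ∃ s, Tendsto (fun N => ∑ n ∈ range N, (θ n * b.coord n x) • b.e n) atTop (𝓝 s) := by
  obtain ⟨s, hs⟩ := (hu θ hθ (fun n => b.coord n x)).mpr ⟨x, b.expansion x⟩
  refine ⟨s, ?_⟩
  have : (fun N => ∑ n ∈ range N, (θ n * b.coord n x) • b.e n)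
      = fun N => ∑ n ∈ range N, b.coord n x • θ n • b.e n := by
    funext N
    exact Finset.sum_congr rfl (fun n _ => by rw [smul_smul, mul_comm])
  rw [this]
  exact hs

noncomputable def sgnflip (hu : b.Unconditional) (hθ : IsSigns θ) (x : X) : X :=
  (sgnflip_exists b θ hu hθ x).choose

lemma sgnflip_tendsto (hu : b.Unconditional) (hθ : IsSigns θ) (x : X) :
    Tendsto (fun N => ∑ n ∈ range N, (θ n * b.coord n x) • b.e n) atTop
      (𝓝 (sgnflip b θ hu hθ x)) :=
  (sgnflip_exists b θ hu hθ x).choose_spec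

lemma coord_sgnflip (hu : b.Unconditional) (hθ : IsSigns θ) (x : X) (m : ℕ) :
    b.coord m (sgnflip b θ hu hθ x) = θ m * b.coord m x := by
  have h := ((b.coord m).continuous.tendsto _).comp (sgnflip_tendsto b θ hu hθ x)
  have heq : ∀ᶠ N in atTop,
      b.coord m (∑ n ∈ range N, (θ n * b.coord n x) • b.e n) = θ m * b.coord m x := by
    filter_upwards [eventually_ge_atTop (m+1)] with N hN
    rw [map_sum]
    have : ∀ n ∈ range N, b.coord m ((θ n * b.coord n x) • b.e n)
        = if m = n then θ n * b.coord n x else 0 := by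
      intro n _
      rw [map_smul, b.biorth]
      by_cases h' : m = n <;> simp [h']
    rw [Finset.sum_congr rfl this, Finset.sum_ite_eq]
    simp [Finset.mem_range, Nat.lt_of_succ_le hN]
  exact tendsto_nhds_unique h (tendsto_const_nhds.congr' (heq.mono fun N h => h.symm))

/-- The sign-sgnflip linear map. -/
noncomputable def sgnflipL (hu : b.Unconditional) (hθ : IsSigns θ) : X →ₗ[ℝ] X where
  toFun := sgnflip b θ hu hθ
  map_add' x y := by
    apply coord_ext b
    intro n
    rw [map_add, coord_sgnflip, coord_sgnflip, coord_sgnflip, map_add]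
    ring
  map_smul' c x := by
    apply coord_ext b
    intro n
    rw [coord_sgnflip, RingHom.id_apply, map_smul, map_smul, coord_sgnflip]
    simp [smul_eq_mul]
    ring

lemma sgnflipL_cont (hu : b.Unconditional) (hθ : IsSigns θ) :
    Continuous (sgnflipL b θ hu hθ) := by
  apply LinearMap.continuous_of_seq_closed_graph
  intro u x y hux huy
  apply coord_ext b
  intro n
  have h1 : Tendsto (fun k => b.coord n (sgnflipL b θ hu hθ (u k))) atTop (𝓝 (b.coord n y)) :=
    ((b.coord n).continuous.tendsto _).comp huy
  have h2 : Tendsto (fun k => b.coord n (sgnflipL b θ hu hθ (u k))) atTop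
      (𝓝 (θ n * b.coord n x)) := by
    have : (fun k => b.coord n (sgnflipL b θ hu hθ (u k))) = fun k => θ n * b.coord n (u k) := by
      funext k; exact coord_sgnflip b θ hu hθ (u k) n
    rw [this]
    exact (((b.coord n).continuous.tendsto _).comp hux).const_mul (θ n)
  rw [tendsto_nhds_unique h1 h2]
  exact (coord_sgnflip b θ hu hθ x n).symm

lemma sgnflip_eq_smul (hu : b.Unconditional) (hθ : IsSigns θ) (x : X) (ε : ℝ)
    (h : ∀ n ∈ b.supp x, θ n = ε) : sgnflipL b θ hu hθ x = ε • x := by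
  apply coord_ext b
  intro n
  show b.coord n (sgnflip b θ hu hθ x) = _
  rw [coord_sgnflip, map_smul]
  by_cases hn : n ∈ b.supp x
  · rw [h n hn]; simp [smul_eq_mul]
  · simp only [UncSchauderBasis.supp, Set.mem_setOf_eq, not_not] at hn
    simp [hn]

/-- Supports of a block sequence are strictly ordered. -/
lemma supp_lt {z : ℕ → X} (hz : b.IsBlockSeq z) :
    ∀ d m, ∀ i ∈ b.supp (z m), ∀ j ∈ b.supp (z (m + d + 1)), i < j := by
  intro d
  induction d with
  | zero => intro m; exact hz.2.2 m
  | succ d ih =>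
    intro m i hi j hj
    obtain ⟨k, hk⟩ : (b.supp (z (m + d + 1))).Nonempty := by
      apply supp_nonempty_of_ne_zero b
      intro h0
      have h1 := hz.1 (m + d + 1)
      rw [h0, norm_zero] at h1
      exact zero_ne_one h1
    have h1 : i < k := ih m i hi k hk
    have h2 : k < j := hz.2.2 (m + d + 1) k hk j hj
    omega

lemma supp_lt' {z : ℕ → X} (hz : b.IsBlockSeq z) {m m' : ℕ} (h : m < m') :
    ∀ i ∈ b.supp (z m), ∀ j ∈ b.supp (z m'), i < j := by
  have : m' = m + (m' - m - 1) + 1 := by omega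
  rw [this]
  exact supp_lt b hz (m' - m - 1) m

lemma sum_range_two_mul (g : ℕ → X) (k : ℕ) :
    ∑ n ∈ range (2*k), g n = ∑ m ∈ range k, g (2*m) + ∑ m ∈ range k, g (2*m+1) := by
  induction k with
  | zero => simp
  | succ k ih =>
    have h2 : 2*(k+1) = (2*k+1)+1 := by ring
    rw [h2, Finset.sum_range_succ, Finset.sum_range_succ, ih,
      Finset.sum_range_succ, Finset.sum_range_succ]
    abel

lemma tendsto_of_even_odd {f : ℕ → X} {l : X}
    (he : Tendsto (fun k => f (2*k)) atTop (𝓝 l))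
    (ho : Tendsto (fun k => f (2*k+1)) atTop (𝓝 l)) : Tendsto f atTop (𝓝 l) := by
  rw [tendsto_atTop'] at he ho ⊢
  intro s hs
  obtain ⟨K1, h1⟩ := he s hs
  obtain ⟨K2, h2⟩ := ho s hs
  refine ⟨2*(K1+K2)+2, fun n hn => ?_⟩
  rcases Nat.even_or_odd n with ⟨k, hk⟩ | ⟨k, hk⟩
  · have : n = 2*k := by omega
    rw [this]; exact h1 k (by omega)
  · rw [hk]; exact h2 k (by omega)

/-- Even/odd splitting of a series over a block sequence. -/
lemma evenOddSplit (hu : b.Unconditional) {z : ℕ → X} (hz : b.IsBlockSeq z) (a : ℕ → ℝ) :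
    Converges (fun n => a n • z n) ↔
      Converges (fun m => a (2*m) • z (2*m)) ∧ Converges (fun m => a (2*m+1) • z (2*m+1)) := by
  classical
  set θ : ℕ → ℝ := fun n => if ∃ m, n ∈ b.supp (z (2*m+1)) then -1 else 1 with hθdef
  have hθ : IsSigns θ := by
    intro n
    by_cases h : ∃ m, n ∈ b.supp (z (2*m+1)) <;> simp [hθdef, h]
  set M := sgnflipL b θ hu hθ with hM
  have hMeven : ∀ m, M (z (2*m)) = z (2*m) := by
    intro m
    rw [show z (2*m) = (1:ℝ) • z (2*m) by rw [one_smul]] 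
    nth_rewrite 1 [show ((1:ℝ) • z (2*m)) = z (2*m) by rw [one_smul]]
    apply sgnflip_eq_smul
    intro n hn
    simp only [hθdef]
    rw [if_neg]
    rintro ⟨m', hm'⟩
    rcases Nat.lt_trichotomy (2*m) (2*m'+1) with h | h | h
    · exact lt_irrefl n (by
        have h1 := supp_lt' b hz h n hn n hm'
        exact h1)
    · omega
    · exact lt_irrefl n (supp_lt' b hz h n hm' n hn)
  have hModd : ∀ m, M (z (2*m+1)) = -z (2*m+1) := by
    intro m
    rw [show -z (2*m+1) = (-1:ℝ) • z (2*m+1) by simp]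
    apply sgnflip_eq_smul
    intro n hn
    simp only [hθdef]
    rw [if_pos ⟨m, hn⟩]
  set S : ℕ → X := fun N => ∑ n ∈ range N, a n • z n with hS
  have key : ∀ k, (2⁻¹:ℝ) • (S (2*k) + M (S (2*k))) = ∑ m ∈ range k, a (2*m) • z (2*m) := by
    intro k
    have hMsum : M (S (2*k)) = ∑ n ∈ range (2*k), a n • M (z n) := by
      rw [hS, map_sum]
      exact Finset.sum_congr rfl (fun n _ => by rw [map_smul])
    rw [hMsum, hS]
    rw [← Finset.sum_add_distrib]
    rw [sum_range_two_mul (fun n => a n • z n + a n • M (z n)) k]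
    have he : ∀ m, a (2*m) • z (2*m) + a (2*m) • M (z (2*m)) = (2:ℝ) • (a (2*m) • z (2*m)) := by
      intro m; rw [hMeven, two_smul]
    have ho : ∀ m, a (2*m+1) • z (2*m+1) + a (2*m+1) • M (z (2*m+1)) = 0 := by
      intro m; rw [hModd, smul_neg, add_neg_cancel]
    rw [Finset.sum_congr rfl (fun m _ => he m), Finset.sum_congr rfl (fun m _ => ho m)]
    simp only [Finset.sum_const_zero, add_zero, Finset.smul_sum]
    refine Finset.sum_congr rfl (fun m _ => ?_)
    rw [smul_smul, smul_smul]
    norm_num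
  have hsplit : ∀ k, S (2*k) = (∑ m ∈ range k, a (2*m) • z (2*m))
      + ∑ m ∈ range k, a (2*m+1) • z (2*m+1) := fun k =>
    sum_range_two_mul (fun n => a n • z n) k
  have h2k : Tendsto (fun k => 2*k) atTop atTop :=
    tendsto_atTop_atTop.2 fun n => ⟨n, fun k hk => by omega⟩
  constructor
  · rintro ⟨s, hs⟩
    have hS2 : Tendsto (fun k => S (2*k)) atTop (𝓝 s) := hs.comp h2k
    have hMS : Tendsto (fun k => M (S (2*k))) atTop (𝓝 (M s)) :=
      ((sgnflipL_cont b θ hu hθ).tendsto s).comp hS2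
    have hE : Tendsto (fun k => ∑ m ∈ range k, a (2*m) • z (2*m)) atTop
        (𝓝 ((2⁻¹:ℝ) • (s + M s))) := by
      have := (hS2.add hMS).const_smul (2⁻¹:ℝ)
      exact this.congr key
    refine ⟨⟨_, hE⟩, ⟨s - ((2:ℝ)⁻¹) • (s + M s), ?_⟩⟩
    have := hS2.sub hE
    apply this.congr
    intro k
    rw [hsplit k]
    abel
  · rintro ⟨⟨u, hu'⟩, ⟨v, hv⟩⟩
    have hS2 : Tendsto (fun k => S (2*k)) atTop (𝓝 (u + v)) := by
      apply (hu'.add hv).congr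
      intro k
      exact (hsplit k).symm
    have hdiff : Tendsto (fun k => a (2*k) • z (2*k)) atTop (𝓝 0) := by
      have h1 : Tendsto (fun k => ∑ m ∈ range (k+1), a (2*m) • z (2*m)) atTop (𝓝 u) :=
        hu'.comp (tendsto_add_atTop_nat 1)
      have := h1.sub hu'
      rw [sub_self] at this
      apply this.congr
      intro k
      rw [Finset.sum_range_succ]
      abel
    have hS2' : Tendsto (fun k => S (2*k+1)) atTop (𝓝 (u + v)) := by
      have := hS2.add hdiff
      rw [add_zero] at this
      apply this.congr
      intro k
      show (∑ n ∈ range (2*k), a n • z n) + a (2*k) • z (2*k) = ∑ n ∈ range (2*k+1), a n • z n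
      rw [Finset.sum_range_succ]
    exact ⟨u + v, tendsto_of_even_odd hS2 hS2'⟩

end Aux

theorem interlaced_equivalent_imp_shift_property
    {X : Type*} [NormedAddCommGroup X] [NormedSpace ℝ X] [CompleteSpace X]
    (b : UncSchauderBasis X) (hu : b.Unconditional)
    (hinter : ∀ x y : ℕ → X, b.IsBlockSeq x → b.IsBlockSeq y →
      (∀ n, (∀ i ∈ b.supp (x n), ∀ j ∈ b.supp (y n), i < j) ∧
            (∀ j ∈ b.supp (y n), ∀ i ∈ b.supp (x (n+1)), j < i)) →
      SeqEquiv x y) :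
    ∀ x : ℕ → X, b.IsBlockSeq x → SeqEquiv x (fun n => x (n+1)) := by
  intro x hx a
  have hnorm := hx.1
  have hfin := hx.2.1
  have hblock : ∀ {m m' : ℕ}, m < m' →
      ∀ i ∈ b.supp (x m), ∀ j ∈ b.supp (x m'), i < j := fun h => supp_lt' b hx h
  -- shift is a block sequence
  have hshift : b.IsBlockSeq (fun n => x (n+1)) :=
    ⟨fun n => hnorm (n+1), fun n => hfin (n+1), fun n => hx.2.2 (n+1)⟩
  -- even and odd subsequences
  have hbe : b.IsBlockSeq (fun m => x (2*m)) :=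
    ⟨fun m => hnorm (2*m), fun m => hfin (2*m),
     fun m => hblock (by omega : 2*m < 2*(m+1))⟩
  have hbo : b.IsBlockSeq (fun m => x (2*m+1)) :=
    ⟨fun m => hnorm (2*m+1), fun m => hfin (2*m+1),
     fun m => hblock (by omega : 2*m+1 < 2*(m+1)+1)⟩
  have hbo2 : b.IsBlockSeq (fun m => x (2*m+2)) :=
    ⟨fun m => hnorm (2*m+2), fun m => hfin (2*m+2),
     fun m => hblock (by omega : 2*m+2 < 2*(m+1)+2)⟩
  have E1 : SeqEquiv (fun m => x (2*m)) (fun m => x (2*m+1)) := by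
    apply hinter _ _ hbe hbo
    intro m
    exact ⟨hblock (by omega : 2*m < 2*m+1),
      fun j hj i hi => hblock (by omega : 2*m+1 < 2*(m+1)) j hj i hi⟩
  have E2 : SeqEquiv (fun m => x (2*m+1)) (fun m => x (2*m+2)) := by
    apply hinter _ _ hbo hbo2
    intro m
    exact ⟨hblock (by omega : 2*m+1 < 2*m+2),
      fun j hj i hi => hblock (by omega : 2*m+2 < 2*(m+1)+1) j hj i hi⟩
  have S1 := evenOddSplit b hu hx a
  have S2 := evenOddSplit b hu hshift a
  rw [S1, S2]
  constructor
  · rintro ⟨h1, h2⟩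
    exact ⟨(E1 (fun m => a (2*m))).mp h1, (E2 (fun m => a (2*m+1))).mp h2⟩
  · rintro ⟨h1, h2⟩
    exact ⟨(E1 (fun m => a (2*m))).mpr h1, (E2 (fun m => a (2*m+1))).mpr h2⟩
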